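/- If g_1,...,g_l are homogeneous elements of K[x_1,...,x_n] forming a regular sequence, then they are algebraically independent over K. -/

import Mathlib

open MvPolynomial

section Aux

variable {n l : ℕ} {K : Type*} [Field K]

private noncomputable abbrev auxJ (g : Fin l → MvPolynomial (Fin n) K) (j : ℕ) :
    Ideal (MvPolynomial (Fin n) K) :=
  Ideal.ofList ((List.ofFn g).take j)

private lemma auxJ_mono (g : Fin l → MvPolynomial (Fin n) K) (j : ℕ) :
    auxJ g j ≤ auxJ g (j + 1) := by
  apply Ideal.span_mono
  intro r hr
  have h : (List.ofFn g).take j <+: (List.ofFn g).take (j + 1) := by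
    have := List.take_prefix j ((List.ofFn g).take (j + 1))
    rwa [List.take_take, min_eq_left (Nat.le_succ j)] at this
  exact h.subset hr

private lemma auxJ_le (g : Fin l → MvPolynomial (Fin n) K) (j : ℕ) :
    auxJ g j ≤ Ideal.ofList (List.ofFn g) :=
  Ideal.span_mono fun r hr => (List.take_prefix j _).subset hr

private lemma g_mem_auxJ (g : Fin l → MvPolynomial (Fin n) K) {j : ℕ} (hj : j < l) :
    g ⟨j, hj⟩ ∈ auxJ g (j + 1) := by
  apply Ideal.subset_span
  have hlen : j < ((List.ofFn g).take (j + 1)).length := by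
    simp [Nat.lt_succ_self, hj]
  have : ((List.ofFn g).take (j + 1))[j] = g ⟨j, hj⟩ := by
    simp
  exact this ▸ List.getElem_mem hlen

private lemma const_eq_zero_of_mem (g : Fin l → MvPolynomial (Fin n) K)
    (hproper : Ideal.ofList (List.ofFn g) ≠ ⊤) {c : K} {j : ℕ}
    (hc : (C c : MvPolynomial (Fin n) K) ∈ auxJ g j) : c = 0 := by
  by_contra hc0
  apply hproper
  rw [Ideal.eq_top_iff_one]
  have h1 : (C c : MvPolynomial (Fin n) K) ∈ Ideal.ofList (List.ofFn g) :=
    auxJ_le g j hc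
  have := Ideal.mul_mem_left _ (C c⁻¹) h1
  rwa [← C_mul, inv_mul_cancel₀ hc0, C_1] at this

private lemma aux_main (g : Fin l → MvPolynomial (Fin n) K)
    (hproper : Ideal.ofList (List.ofFn g) ≠ ⊤)
    (hNZD : ∀ (j : ℕ) (hj : j < l) (x : MvPolynomial (Fin n) K),
      x * g ⟨j, hj⟩ ∈ auxJ g j → x ∈ auxJ g j) :
    ∀ (k j : ℕ), j + k = l → ∀ (D : ℕ) (P : MvPolynomial (Fin l) K),
      P.totalDegree ≤ D →
      (∀ m ∈ P.support, ∀ i : Fin l, (i : ℕ) < j → m i = 0) →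
      MvPolynomial.aeval g P ∈ auxJ g j → P = 0 := by
  intro k
  induction k with
  | zero =>
    intro j hjl D P _ hvars hmem
    -- j = l : P is a constant
    subst_eqs
    have hPc : P = C (P.coeff 0) := by
      ext m
      by_cases hm : m = 0
      · simp [hm]
      · rw [coeff_C, if_neg (Ne.symm hm)]
        by_contra hcm
        apply hm
        ext i
        exact hvars m (mem_support_iff.mpr hcm) i (by omega)
    rw [hPc] at hmem ⊢
    rw [aeval_C, MvPolynomial.algebraMap_eq] at hmem
    rw [const_eq_zero_of_mem g hproper hmem, C_0]
  | succ k ih =>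
    intro j hjl D
    have hj : j < l := by omega
    induction D with
    | zero =>
      intro P hdeg hvars hmem
      have hd0 : P.totalDegree = 0 := Nat.le_zero.mp hdeg
      rw [totalDegree_eq_zero_iff] at hd0
      have hPc : P = C (P.coeff 0) := by
        ext m
        by_cases hm : m = 0
        · simp [hm]
        · rw [coeff_C, if_neg (Ne.symm hm)]
          by_contra hcm
          exact hm (Finsupp.ext fun i => hd0 m (mem_support_iff.mpr hcm) i)
      rw [hPc] at hmem ⊢
      rw [aeval_C, MvPolynomial.algebraMap_eq] at hmem
      rw [const_eq_zero_of_mem g hproper hmem, C_0]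
    | succ D ihD =>
      intro P hdeg hvars hmem
      set c : Fin l := ⟨j, hj⟩ with hc
      set s : Fin l →₀ ℕ := Finsupp.single c 1 with hs
      set Q : MvPolynomial (Fin l) K := P.divMonomial s with hQ
      set P₀ : MvPolynomial (Fin l) K := P.modMonomial s with hP₀
      have hsplit : monomial s 1 * Q + P₀ = P := P.divMonomial_add_modMonomial s
      have hXc : (monomial s (1 : K) : MvPolynomial (Fin l) K) = X c := rfl
      -- support of Q
      have hQsupp : ∀ m ∈ Q.support, s + m ∈ P.support := by
        intro m hm
        rw [mem_support_iff] at hm ⊢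
        rwa [hQ, coeff_divMonomial] at hm
      -- vars of Q : still ≥ j
      have hQvars : ∀ m ∈ Q.support, ∀ i : Fin l, (i : ℕ) < j → m i = 0 := by
        intro m hm i hi
        have := hvars _ (hQsupp m hm) i hi
        have hic : i ≠ c := by
          intro h; rw [h] at hi; simp [hc] at hi
        rwa [Finsupp.add_apply, hs, Finsupp.single_apply, if_neg hic.symm,
          Nat.zero_add] at this
      -- vars of P₀ : ≥ j + 1
      have hP₀vars : ∀ m ∈ P₀.support, ∀ i : Fin l, (i : ℕ) < j + 1 → m i = 0 := by
        intro m hm i hi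
        rw [mem_support_iff] at hm
        by_cases hle : s ≤ m
        · rw [hP₀, coeff_modMonomial_of_le _ hle] at hm
          exact absurd rfl hm
        · by_cases hic : i = c
          · subst hic
            by_contra hmi
            exact hle (Finsupp.single_le_iff.mpr (Nat.one_le_iff_ne_zero.mpr hmi))
          · have hij : (i : ℕ) < j := by
              rcases Nat.lt_succ_iff_lt_or_eq.mp hi with h | h
              · exact h
              · exact absurd (Fin.ext h) hic
            rw [hP₀, coeff_modMonomial_of_not_le _ hle] at hm
            exact hvars m (mem_support_iff.mpr hm) i hij
      -- membership of P₀ in J (j+1)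
      have haevalP : MvPolynomial.aeval g P = g c * MvPolynomial.aeval g Q
          + MvPolynomial.aeval g P₀ := by
        conv_lhs => rw [← hsplit]
        rw [map_add, map_mul, hXc, aeval_X]
      have hP₀mem : MvPolynomial.aeval g P₀ ∈ auxJ g (j + 1) := by
        have h1 : MvPolynomial.aeval g P ∈ auxJ g (j + 1) := auxJ_mono g j hmem
        have h2 : g c * MvPolynomial.aeval g Q ∈ auxJ g (j + 1) :=
          Ideal.mul_mem_right _ _ (g_mem_auxJ g hj)
        have := Ideal.sub_mem _ h1 h2
        rwa [haevalP, add_sub_cancel_left] at this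
      have hP₀zero : P₀ = 0 :=
        ih (j + 1) (by omega) (P₀.totalDegree) P₀ le_rfl hP₀vars hP₀mem
      -- now P = Q * X c
      have hPQ : P = X c * Q := by rw [← hsplit, hXc, hP₀zero, add_zero]
      -- membership of Q's evaluation in J j
      have hQmem : MvPolynomial.aeval g Q ∈ auxJ g j := by
        apply hNZD j hj
        have : MvPolynomial.aeval g P = MvPolynomial.aeval g Q * g c := by
          rw [haevalP, hP₀zero, map_zero, add_zero, mul_comm]
        rwa [← this]
      -- degree of Q
      have hQdeg : Q.totalDegree ≤ D := by
        apply Finset.sup_le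
        intro m hm
        have h1 : ((s + m).sum fun _ e => e) ≤ D + 1 :=
          le_trans (le_totalDegree (hQsupp m hm)) hdeg
        rw [Finsupp.sum_add_index (by simp) (by simp)] at h1
        have hss : (s.sum fun _ e => e) = 1 := by simp [hs]
        omega
      have hQzero : Q = 0 := ihD Q hQdeg hQvars hQmem
      rw [hPQ, hQzero, mul_zero]

end Aux

/-- homogeneous elements of `K[x_1,…,x_n]` forming a regular sequence
are algebraically independent over `K`. -/
theorem regular_sequence_algebraicIndependent {n l : ℕ} {K : Type*} [Field K]
    (g : Fin l → MvPolynomial (Fin n) K) (d : Fin l → ℕ)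
    (hhom : ∀ i, (g i).IsHomogeneous (d i))
    (hreg : RingTheory.Sequence.IsRegular (MvPolynomial (Fin n) K) (List.ofFn g)) :
    AlgebraicIndependent K g := by
  classical
  have hproper : Ideal.ofList (List.ofFn g) ≠ ⊤ := by
    intro h
    apply hreg.top_ne_smul
    rw [smul_eq_mul, Ideal.mul_top, h]
  have hNZD : ∀ (j : ℕ) (hj : j < l) (x : MvPolynomial (Fin n) K),
      x * g ⟨j, hj⟩ ∈ auxJ g j → x ∈ auxJ g j := by
    intro j hj x hx
    have hjlen : j < (List.ofFn g).length := by simpa using hj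
    have hsm := hreg.toIsWeaklyRegular.regular_mod_prev j hjlen
    have hgj : (List.ofFn g)[j] = g ⟨j, hj⟩ := by simp
    rw [hgj] at hsm
    -- hsm : IsSMulRegular (R ⧸ (ofList (take j) • ⊤)) (g ⟨j, hj⟩)
    have hST : (Ideal.ofList ((List.ofFn g).take j) •
        (⊤ : Submodule (MvPolynomial (Fin n) K) (MvPolynomial (Fin n) K)))
        = auxJ g j := by
      rw [smul_eq_mul, Ideal.mul_top]
    have key : g ⟨j, hj⟩ • (Submodule.Quotient.mk x :
        MvPolynomial (Fin n) K ⧸ (Ideal.ofList ((List.ofFn g).take j) • ⊤ :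
          Submodule (MvPolynomial (Fin n) K) (MvPolynomial (Fin n) K)))
        = g ⟨j, hj⟩ • (0 : _) := by
      rw [smul_zero, ← Submodule.Quotient.mk_smul, Submodule.Quotient.mk_eq_zero]
      rw [hST]
      rwa [smul_eq_mul, mul_comm]
    have := hsm key
    rw [Submodule.Quotient.mk_eq_zero, hST] at this
    exact this
  rw [algebraicIndependent_iff]
  intro p hp
  exact aux_main g hproper hNZD l 0 (by omega) p.totalDegree p le_rfl
    (by intro m _ i hi; omega) (by rw [hp]; exact Ideal.zero_mem _)
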